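/- arXiv:2508.10158 — 3 statements merged into one kernel-verified Lean document; each statement's English description precedes it below -/
import Mathlib

section
/- Let M be diagonalizable, M = W Λ W^{-1}, with all eigenvalues in an interval [a,b] not containing 0 or 1, A = I - M. If one step of AA(m) (as in Lemma on diagonalizable case) is applied after k fixed-point iterations (with m ≤ k), then \|r_{k+1}\| ≤ C(a,b,m) κ₂(W) \|M\| \|r_k\|, where C(a,b,m) = |T_m((2ab - a - b)/(b - a))|^{-1} with T_m the Chebyshev polynomial of degree m, and κ₂(W) = \|W\| \|W^{-1}\|. -/
open Polynomial Polynomial.Chebyshev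

/-- Euclidean (2-)norm of a vector in `Fin n → ℝ`. -/
noncomputable def e2norm {n : ℕ} (v : Fin n → ℝ) : ℝ :=
  ‖(WithLp.equiv 2 (Fin n → ℝ)).symm v‖

/-- Operator 2-norm of a square real matrix. -/
noncomputable def opNorm2 {n : ℕ} (N : Matrix (Fin n) (Fin n) ℝ) : ℝ :=
  ‖Matrix.toEuclideanCLM (𝕜 := ℝ) N‖

/-- The Chebyshev bound `C(a,b,m) = |T_m((2ab-a-b)/(b-a))|⁻¹`. -/
noncomputable def chebC (a b : ℝ) (m : ℕ) : ℝ :=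
  |(Polynomial.Chebyshev.T ℝ (m : ℤ)).eval ((2 * a * b - a - b) / (b - a))|⁻¹

lemma e2norm_mulVec_le {n : ℕ} (N : Matrix (Fin n) (Fin n) ℝ) (v : Fin n → ℝ) :
    e2norm (N.mulVec v) ≤ opNorm2 N * e2norm v := by
  rw [e2norm, e2norm, opNorm2, WithLp.equiv_symm_apply,
    ← Matrix.toEuclideanCLM_toLp]
  exact (Matrix.toEuclideanCLM (𝕜 := ℝ) N).le_opNorm _

lemma e2norm_eq {n : ℕ} (v : Fin n → ℝ) :
    e2norm v = Real.sqrt (∑ i, (v i) ^ 2) := by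
  rw [e2norm, EuclideanSpace.norm_eq]
  congr 1; refine Finset.sum_congr rfl fun i _ => ?_
  rw [WithLp.equiv_symm_apply, PiLp.toLp_apply, Real.norm_eq_abs, sq_abs]

lemma e2norm_le_of_abs_le {n : ℕ} (c : ℝ) (hc : 0 ≤ c) (u v : Fin n → ℝ)
    (h : ∀ i, |u i| ≤ c * |v i|) : e2norm u ≤ c * e2norm v := by
  rw [e2norm_eq, e2norm_eq, ← Real.sqrt_sq hc, ← Real.sqrt_mul (by positivity),
    Finset.mul_sum]
  apply Real.sqrt_le_sqrt
  refine Finset.sum_le_sum fun i _ => ?_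
  have h2 : |u i| ^ 2 ≤ (c * |v i|) ^ 2 := pow_le_pow_left₀ (abs_nonneg _) (h i) 2
  calc (u i)^2 = |u i|^2 := (sq_abs _).symm
    _ ≤ (c * |v i|)^2 := h2
    _ = c^2 * (v i)^2 := by rw [mul_pow, sq_abs]

lemma abs_T_le_one (y : ℝ) (hy : y ∈ Set.Icc (-1:ℝ) 1) (j : ℤ) :
    |(T ℝ j).eval y| ≤ 1 := by
  obtain ⟨θ, hθ⟩ : ∃ θ, Real.cos θ = y := ⟨Real.arccos y, Real.cos_arccos hy.1 hy.2⟩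
  rw [← hθ, T_real_cos]
  exact Real.abs_cos_le_one _

lemma T_aux (x : ℝ) (hx : 1 ≤ x) : ∀ j : ℕ,
    1 ≤ (T ℝ j).eval x ∧ (T ℝ j).eval x ≤ (T ℝ (j+1)).eval x := by
  intro j
  induction j with
  | zero => simp [T_zero, T_one, hx]
  | succ i ih =>
    obtain ⟨h1, h2⟩ := ih
    have key : (T ℝ ((i:ℤ)+1+1)).eval x = 2*x*(T ℝ ((i:ℤ)+1)).eval x - (T ℝ (i:ℤ)).eval x := by
      have := T_add_two ℝ (i:ℤ)
      rw [show ((i:ℤ)+1+1) = (i:ℤ)+2 by ring, this]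
      simp
    constructor
    · push_cast; linarith
    · push_cast at *
      rw [show ((i:ℤ)+1+1) = ((i:ℤ)+1)+1 by ring] at key ⊢
      rw [key]; nlinarith

lemma T_eval_neg (x : ℝ) : ∀ i : ℕ, (T ℝ (i:ℤ)).eval (-x) = (-1)^i * (T ℝ (i:ℤ)).eval x := by
    intro i
    induction i using Nat.twoStepInduction with
    | zero => simp [T_zero]
    | one => simp [T_one]
    | more i h1 h2 =>
      have key := T_add_two ℝ (i:ℤ)
      have : ((i+2:ℕ):ℤ) = (i:ℤ)+2 := by push_cast; ring
      rw [this, key]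
      simp only [eval_sub, eval_mul, eval_ofNat, eval_X]
      push_cast at h1 h2 ⊢
      rw [h1, h2]
      ring

lemma one_le_abs_T (x : ℝ) (hx : 1 ≤ |x|) (j : ℕ) : 1 ≤ |(T ℝ (j:ℤ)).eval x| := by
  rcases le_or_gt 1 x with h | h
  · have := (T_aux x h j).1
    calc (1:ℝ) ≤ (T ℝ j).eval x := this
      _ ≤ |(T ℝ j).eval x| := le_abs_self _
  · have hx' : 1 ≤ -x := by rcases abs_cases x with ⟨h1,h2⟩|⟨h1,h2⟩ <;> linarith
    have := (T_aux (-x) hx' j).1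
    have heq : (T ℝ (j:ℤ)).eval (-(-x)) = (-1)^j * (T ℝ (j:ℤ)).eval (-x) := T_eval_neg (-x) j
    rw [neg_neg] at heq
    rw [heq, abs_mul, abs_pow, abs_neg, abs_one, one_pow, one_mul]
    calc (1:ℝ) ≤ (T ℝ j).eval (-x) := this
      _ ≤ |(T ℝ j).eval (-x)| := le_abs_self _

lemma natDegree_T_le (j : ℕ) : ((T ℝ (j:ℤ)).natDegree ≤ j) := by
  induction j using Nat.twoStepInduction with
  | zero => simp [T_zero]
  | one => simp [T_one]
  | more i h1 h2 =>
    have : ((i+2:ℕ):ℤ) = (i:ℤ)+2 := by push_cast; ring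
    rw [this, T_add_two]
    refine le_trans (natDegree_sub_le _ _) ?_
    simp only [max_le_iff]
    constructor
    · refine le_trans (natDegree_mul_le) ?_
      have : (2 * X : ℝ[X]).natDegree ≤ 1 := by
        refine le_trans natDegree_mul_le ?_
        simp [natDegree_X_le]
      have h2' : (T ℝ ((i:ℤ)+1)).natDegree ≤ i+1 := by exact_mod_cast h2
      omega
    · omega

lemma mulVec_sumFin {n : ℕ} {ι : Type*} (s : Finset ι) (N : Matrix (Fin n) (Fin n) ℝ)
    (v : ι → Fin n → ℝ) : N.mulVec (∑ i ∈ s, v i) = ∑ i ∈ s, N.mulVec (v i) := by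
  classical
  induction s using Finset.induction_on with
  | empty => simp
  | insert _ _ h ih => rw [Finset.sum_insert h, Finset.sum_insert h, Matrix.mulVec_add, ih]

lemma sum_mulVecFin {n : ℕ} {ι : Type*} (s : Finset ι) (B : ι → Matrix (Fin n) (Fin n) ℝ)
    (w : Fin n → ℝ) : (∑ i ∈ s, B i).mulVec w = ∑ i ∈ s, (B i).mulVec w := by
  classical
  induction s using Finset.induction_on with
  | empty => simp
  | insert _ _ h ih => rw [Finset.sum_insert h, Finset.sum_insert h, Matrix.add_mulVec, ih]

lemma diagonal_sumFin {n : ℕ} {ι : Type*} (s : Finset ι) (f : ι → Fin n → ℝ) :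
    Matrix.diagonal (∑ i ∈ s, f i) = ∑ i ∈ s, Matrix.diagonal (f i) := by
  classical
  induction s using Finset.induction_on with
  | empty =>
    rw [Finset.sum_empty, Finset.sum_empty, show (0 : Fin n → ℝ) = fun _ => 0 from rfl,
      Matrix.diagonal_zero]
  | insert _ _ h ih =>
    rw [Finset.sum_insert h, Finset.sum_insert h, ← ih, Matrix.diagonal_add]
    rfl

/-- One-step gain bound: if `M = W Λ W⁻¹` is diagonalizable with eigenvalues in `[a,b]`,
`0, 1 ∉ [a,b]`, the first `k` iterates are fixed-point (Richardson) iterates, and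
`x_{k+1}` is one step of AA(m) with `m ≤ k`, then
`‖r_{k+1}‖ ≤ C(a,b,m) κ₂(W) ‖M‖ ‖r_k‖`. -/
theorem stmt_5 (n : ℕ) (a b : ℝ) (hab : a < b)
    (h0 : (0 : ℝ) ∉ Set.Icc a b) (h1 : (1 : ℝ) ∉ Set.Icc a b)
    (W M : Matrix (Fin n) (Fin n) ℝ) (hW : IsUnit W.det)
    (d : Fin n → ℝ) (hd : ∀ i, d i ∈ Set.Icc a b)
    (hM : M = W * Matrix.diagonal d * W⁻¹)
    (A : Matrix (Fin n) (Fin n) ℝ) (hA : A = 1 - M)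
    (f : Fin n → ℝ) (x : ℕ → Fin n → ℝ) (k m : ℕ) (hm : m ≤ k)
    (hfp : ∀ j < k, x (j + 1) = M.mulVec (x j) + f)
    (γ : Fin m → ℝ)
    (hmin : ∀ γ' : Fin m → ℝ,
      e2norm ((f - A.mulVec (x k)) + ∑ i : Fin m, γ i •
          ((f - A.mulVec (x k)) - (f - A.mulVec (x (k - (i.1 + 1)))))) ≤
      e2norm ((f - A.mulVec (x k)) + ∑ i : Fin m, γ' i •
          ((f - A.mulVec (x k)) - (f - A.mulVec (x (k - (i.1 + 1)))))))
    (xk1 : Fin n → ℝ)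
    (hstep : xk1 = (M.mulVec (x k) + f) + ∑ i : Fin m, γ i •
        ((M.mulVec (x k) + f) - (M.mulVec (x (k - (i.1 + 1))) + f))) :
    e2norm (f - A.mulVec xk1) ≤
      chebC a b m * (opNorm2 W * opNorm2 W⁻¹) * opNorm2 M *
        e2norm (f - A.mulVec (x k)) := by
  have hab' : (0:ℝ) < b - a := by linarith
  -- residual sequence
  set r : ℕ → Fin n → ℝ := fun j => f - A.mulVec (x j) with hrdef
  have hr : ∀ j, j < k → r (j+1) = M.mulVec (r j) := by
    intro j hj
    show f - A.mulVec (x (j+1)) = M.mulVec (f - A.mulVec (x j))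
    rw [hfp j hj, hA]
    simp only [Matrix.sub_mulVec, Matrix.one_mulVec, Matrix.mulVec_add, Matrix.mulVec_sub]
    abel
  set w : Fin n → ℝ := r (k - m) with hwdef
  have hpow : ∀ t, t ≤ m → r (k - m + t) = (M^t).mulVec w := by
    intro t
    induction t with
    | zero => intro _; simp [pow_zero, Matrix.one_mulVec, hwdef]
    | succ t ih =>
      intro ht
      have h1 : k - m + t < k := by omega
      have h2 : k - m + (t+1) = (k - m + t) + 1 := by omega
      rw [h2, hr _ h1, ih (by omega), Matrix.mulVec_mulVec, ← pow_succ']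
  have hrk : r k = (M^m).mulVec w := by
    have := hpow m le_rfl
    rwa [show k - m + m = k by omega] at this
  have hri : ∀ i : Fin m, r (k - (i.1+1)) = (M^(m - (i.1+1))).mulVec w := by
    intro i
    have hi := i.2
    have := hpow (m - (i.1+1)) (by omega)
    rwa [show k - m + (m - (i.1+1)) = k - (i.1+1) by omega] at this
  -- sign facts
  have hcase : 0 < a ∨ b < 0 := by
    by_contra hc
    push_neg at hc
    exact h0 (Set.mem_Icc.mpr ⟨hc.1, hc.2⟩)
  have hd0 : ∀ i, d i ≠ 0 := by
    intro i hz
    exact h0 (hz ▸ hd i)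
  have h1' : 1 < a ∨ b < 1 := by
    by_contra hc
    push_neg at hc
    exact h1 (Set.mem_Icc.mpr ⟨hc.1, hc.2⟩)
  -- the Chebyshev argument point
  set ψ1 : ℝ := (2*a*b - a - b)/(b - a) with hψ1def
  have habs1 : 1 ≤ |ψ1| := by
    rcases hcase with ha | hb
    · rcases h1' with h | h
      · have : 1 ≤ ψ1 := by
          rw [hψ1def, le_div_iff₀ hab']
          nlinarith
        exact le_abs.mpr (Or.inl this)
      · have : ψ1 ≤ -1 := by
          rw [hψ1def, div_le_iff₀ hab']
          nlinarith
        exact le_abs.mpr (Or.inr (by linarith))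
    · have : 1 ≤ ψ1 := by
        rw [hψ1def, le_div_iff₀ hab']
        nlinarith
      exact le_abs.mpr (Or.inl this)
  set t0 : ℝ := (T ℝ (m:ℤ)).eval ψ1 with ht0def
  have ht0 : 1 ≤ |t0| := one_le_abs_T _ habs1 m
  have ht0ne : t0 ≠ 0 := by
    intro h; rw [h, abs_zero] at ht0; linarith
  have hchebC : chebC a b m = |t0|⁻¹ := rfl
  have hchebC_nonneg : 0 ≤ chebC a b m := by rw [hchebC]; positivity
  -- membership of transformed eigenvalues
  have hmem : ∀ i, (2*a*b*(d i)⁻¹ - (a+b))/(b-a) ∈ Set.Icc (-1:ℝ) 1 := by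
    intro i
    obtain ⟨hai, hbi⟩ := hd i
    have hti : d i ≠ 0 := hd0 i
    have htt : d i * (d i)⁻¹ = 1 := mul_inv_cancel₀ hti
    have e1 : a * b * (d i)⁻¹ - a = a * (d i)⁻¹ * (b - d i) := by
      linear_combination a * htt
    have e2 : b - a * b * (d i)⁻¹ = b * (d i)⁻¹ * (d i - a) := by
      linear_combination (-b) * htt
    have hat : 0 ≤ a * (d i)⁻¹ ∧ 0 ≤ b * (d i)⁻¹ := by
      rcases hcase with ha | hb
      · have hdi : 0 < d i := lt_of_lt_of_le ha hai
        have hbpos : 0 < b := lt_trans ha hab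
        exact ⟨le_of_lt (mul_pos ha (inv_pos.mpr hdi)),
          le_of_lt (mul_pos hbpos (inv_pos.mpr hdi))⟩
      · have hdi : d i < 0 := lt_of_le_of_lt hbi hb
        have hinv : (d i)⁻¹ < 0 := inv_neg''.mpr hdi
        constructor
        · exact le_of_lt (mul_pos_of_neg_of_neg (by linarith) hinv)
        · exact le_of_lt (mul_pos_of_neg_of_neg hb hinv)
      
    constructor
    · rw [le_div_iff₀ hab']
      nlinarith [hat.1, mul_nonneg hat.1 (sub_nonneg.mpr hbi)]
    · rw [div_le_iff₀ hab']
      nlinarith [hat.2, mul_nonneg hat.2 (sub_nonneg.mpr hai)]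
  -- the polynomial s
  set p : ℝ := 2*a*b/(b-a) with hpdef
  set q : ℝ := -((a+b)/(b-a)) with hqdef
  set ψp : ℝ[X] := Polynomial.C p * Polynomial.X + Polynomial.C q with hψpdef
  set s : ℝ[X] := Polynomial.C t0⁻¹ * ((T ℝ (m:ℤ)).comp ψp) with hsdef
  have hseval : ∀ u : ℝ, s.eval u = t0⁻¹ * (T ℝ (m:ℤ)).eval (p*u+q) := by
    intro u
    rw [hsdef, eval_mul, eval_C, eval_comp]
    congr 2
    rw [hψpdef]
    simp
  have hpq : ∀ u:ℝ, p*u+q = (2*a*b*u - (a+b))/(b-a) := by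
    intro u
    rw [hpdef, hqdef]
    field_simp
    ring
  have hψ11 : p*1+q = ψ1 := by rw [hpq, hψ1def]; ring_nf
  have hs1 : s.eval 1 = 1 := by
    rw [hseval, hψ11, ← ht0def]
    exact inv_mul_cancel₀ ht0ne
  have hsdeg : s.natDegree < m + 1 := by
    have hψpd : ψp.natDegree ≤ 1 := by
      rw [hψpdef]
      refine le_trans (natDegree_add_le _ _) ?_
      simp only [max_le_iff]
      refine ⟨le_trans natDegree_mul_le ?_, ?_⟩
      · simp [natDegree_X_le]
      · simp
    have h1 : s.natDegree ≤ ((T ℝ (m:ℤ)).comp ψp).natDegree := natDegree_C_mul_le _ _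
    have h2 : ((T ℝ (m:ℤ)).comp ψp).natDegree ≤ (T ℝ (m:ℤ)).natDegree * ψp.natDegree :=
      natDegree_comp_le
    have h3 := natDegree_T_le m
    calc s.natDegree ≤ (T ℝ (m:ℤ)).natDegree * ψp.natDegree := le_trans h1 h2
      _ ≤ m * 1 := Nat.mul_le_mul h3 hψpd
      _ < m + 1 := by omega
  have hsevalsum : ∀ u:ℝ, s.eval u = ∑ j ∈ Finset.range (m+1), s.coeff j * u^j :=
    fun u => eval_eq_sum_range' hsdeg u
  have hcsum : (∑ j ∈ Finset.range m, s.coeff (j+1)) + s.coeff 0 = 1 := by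
    have := hsevalsum 1
    rw [hs1] at this
    simp only [one_pow, mul_one] at this
    rw [Finset.sum_range_succ'] at this
    exact this.symm
  -- the competitor coefficients
  set γ' : Fin m → ℝ := fun i => -(s.coeff (i.1+1)) with hγ'def
  set g : ℝ → ℝ := fun t => t^m + ∑ i : Fin m, γ' i * (t^m - t^(m-(i.1+1))) with hgdef
  have hg : ∀ t:ℝ, t ≠ 0 → g t = t^m * s.eval t⁻¹ := by
    intro t ht
    rw [hsevalsum, Finset.mul_sum]
    have hterm : ∀ j ∈ Finset.range (m+1), t^m * (s.coeff j * (t⁻¹)^j) = s.coeff j * t^(m-j) := by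
      intro j hj
      rw [Finset.mem_range] at hj
      have hje : t^(m-j) * t^j = t^m := by rw [← pow_add]; congr 1; omega
      have h3 : (t:ℝ)^j ≠ 0 := pow_ne_zero _ ht
      rw [inv_pow]
      field_simp
      linear_combination (-(s.coeff j)) * hje
    rw [Finset.sum_congr rfl hterm, Finset.sum_range_succ']
    have hfin : ∑ i : Fin m, γ' i * (t^m - t^(m-(i.1+1)))
        = ∑ j ∈ Finset.range m, -(s.coeff (j+1)) * (t^m - t^(m-(j+1))) :=
      Fin.sum_univ_eq_sum_range (fun j => -(s.coeff (j+1)) * (t^m - t^(m-(j+1)))) m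
    show t^m + ∑ i : Fin m, γ' i * (t^m - t^(m-(i.1+1)))
        = ∑ j ∈ Finset.range m, s.coeff (j+1) * t^(m-(j+1)) + s.coeff 0 * t^(m-0)
    rw [hfin]
    have expand : ∀ j ∈ Finset.range m, -(s.coeff (j+1)) * (t^m - t^(m-(j+1)))
        = s.coeff (j+1) * t^(m-(j+1)) - s.coeff (j+1) * t^m := by intro j _; ring
    rw [Finset.sum_congr rfl expand, Finset.sum_sub_distrib, ← Finset.sum_mul,
      Nat.sub_zero]
    linear_combination (-(t^m : ℝ)) * hcsum
  -- bound on g at eigenvalues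
  have hgb : ∀ i, |g (d i)| ≤ chebC a b m * |(d i)^m| := by
    intro i
    rw [hg _ (hd0 i), abs_mul, hseval, abs_mul, abs_inv, hpq]
    calc |(d i)^m| * (|t0|⁻¹ * |(T ℝ (m:ℤ)).eval ((2*a*b*(d i)⁻¹ - (a+b))/(b-a))|)
        ≤ |(d i)^m| * (|t0|⁻¹ * 1) := by
          apply mul_le_mul_of_nonneg_left _ (abs_nonneg _)
          exact mul_le_mul_of_nonneg_left (abs_T_le_one _ (hmem i) _) (by positivity)
      _ = chebC a b m * |(d i)^m| := by rw [hchebC]; ring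
  -- matrix diagonalization facts
  have hWl : W⁻¹ * W = 1 := Matrix.nonsing_inv_mul W hW
  have hWr : W * W⁻¹ = 1 := Matrix.mul_nonsing_inv W hW
  have hMp : ∀ t:ℕ, M^t = W * Matrix.diagonal (fun i => d i ^ t) * W⁻¹ := by
    intro t
    induction t with
    | zero =>
      rw [pow_zero, show (Matrix.diagonal (fun i => d i ^ 0) : Matrix (Fin n) (Fin n) ℝ)
        = 1 by simp [Matrix.diagonal_one], Matrix.mul_one, hWr]
    | succ t ih =>
      rw [pow_succ, ih, hM]
      calc W * Matrix.diagonal (fun i => d i ^ t) * W⁻¹ * (W * Matrix.diagonal d * W⁻¹)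
          = W * Matrix.diagonal (fun i => d i ^ t) * (W⁻¹ * W) * (Matrix.diagonal d * W⁻¹) := by
            simp only [Matrix.mul_assoc]
        _ = W * (Matrix.diagonal (fun i => d i ^ t) * Matrix.diagonal d) * W⁻¹ := by
            rw [hWl, Matrix.mul_one]; simp only [Matrix.mul_assoc]
        _ = W * Matrix.diagonal (fun i => d i ^ (t+1)) * W⁻¹ := by
            rw [Matrix.diagonal_mul_diagonal]
            congr 1
  -- key matrix identity
  have hKeyM : M^m + ∑ i : Fin m, γ' i • (M^m - M^(m-(i.1+1)))
      = W * Matrix.diagonal (fun j => g (d j)) * W⁻¹ := by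
    have step1 : ∀ i : Fin m, γ' i • (M^m - M^(m-(i.1+1)))
        = W * (Matrix.diagonal (fun j => γ' i * (d j^m - d j^(m-(i.1+1))))) * W⁻¹ := by
      intro i
      rw [hMp m, hMp (m-(i.1+1)), ← Matrix.sub_mul, ← Matrix.mul_sub, Matrix.diagonal_sub]
      rw [show (fun j => γ' i * (d j^m - d j^(m-(i.1+1))))
          = γ' i • (fun j => d j^m - d j^(m-(i.1+1))) from rfl,
        Matrix.diagonal_smul, Matrix.mul_smul, Matrix.smul_mul]
    rw [Finset.sum_congr rfl (fun i _ => step1 i), ← Finset.sum_mul, ← Finset.mul_sum,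
      ← diagonal_sumFin, hMp m]
    rw [show (∑ i : Fin m, fun j => γ' i * (d j ^ m - d j ^ (m - (i.1+1))))
        = fun j => ∑ i : Fin m, γ' i * (d j ^ m - d j ^ (m - (i.1+1))) by
      funext j; rw [Finset.sum_apply]]
    rw [← Matrix.add_mul, ← Matrix.mul_add, Matrix.diagonal_add]
  -- the competitor vector
  have hv : r k + ∑ i : Fin m, γ' i • (r k - r (k - (i.1+1)))
      = (W * Matrix.diagonal (fun j => g (d j)) * W⁻¹).mulVec w := by
    rw [← hKeyM, Matrix.add_mulVec, sum_mulVecFin, ← hrk]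
    congr 1
    refine Finset.sum_congr rfl fun i _ => ?_
    rw [Matrix.smul_mulVec, Matrix.sub_mulVec, ← hrk, ← hri i]
  -- norm chain
  have c1 : e2norm (r k + ∑ i : Fin m, γ' i • (r k - r (k - (i.1+1))))
      ≤ opNorm2 W * e2norm ((Matrix.diagonal (fun j => g (d j))).mulVec (W⁻¹.mulVec w)) := by
    rw [hv, ← Matrix.mulVec_mulVec, ← Matrix.mulVec_mulVec]
    exact e2norm_mulVec_le _ _
  have c2 : e2norm ((Matrix.diagonal (fun j => g (d j))).mulVec (W⁻¹.mulVec w))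
      ≤ chebC a b m * e2norm ((Matrix.diagonal (fun j => d j^m)).mulVec (W⁻¹.mulVec w)) := by
    apply e2norm_le_of_abs_le _ hchebC_nonneg
    intro j
    rw [Matrix.mulVec_diagonal, Matrix.mulVec_diagonal, abs_mul, abs_mul, ← mul_assoc]
    exact mul_le_mul_of_nonneg_right (hgb j) (abs_nonneg _)
  have c3 : (Matrix.diagonal (fun j => d j^m)).mulVec (W⁻¹.mulVec w) = W⁻¹.mulVec (r k) := by
    rw [hrk, hMp m, Matrix.mulVec_mulVec, Matrix.mulVec_mulVec]
    congr 1
    simp only [← Matrix.mul_assoc]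
    rw [hWl, Matrix.one_mul]
  have c4 : e2norm (W⁻¹.mulVec (r k)) ≤ opNorm2 W⁻¹ * e2norm (r k) := e2norm_mulVec_le _ _
  have chain : e2norm (r k + ∑ i : Fin m, γ' i • (r k - r (k - (i.1+1))))
      ≤ chebC a b m * (opNorm2 W * opNorm2 W⁻¹) * e2norm (r k) := by
    have hWn : (0:ℝ) ≤ opNorm2 W := norm_nonneg _
    calc e2norm (r k + ∑ i : Fin m, γ' i • (r k - r (k - (i.1+1))))
        ≤ opNorm2 W * e2norm ((Matrix.diagonal (fun j => g (d j))).mulVec (W⁻¹.mulVec w)) := c1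
      _ ≤ opNorm2 W * (chebC a b m * e2norm ((Matrix.diagonal (fun j => d j^m)).mulVec (W⁻¹.mulVec w))) :=
          mul_le_mul_of_nonneg_left c2 hWn
      _ = opNorm2 W * (chebC a b m * e2norm (W⁻¹.mulVec (r k))) := by rw [c3]
      _ ≤ opNorm2 W * (chebC a b m * (opNorm2 W⁻¹ * e2norm (r k))) := by
          apply mul_le_mul_of_nonneg_left _ hWn
          exact mul_le_mul_of_nonneg_left c4 hchebC_nonneg
      _ = chebC a b m * (opNorm2 W * opNorm2 W⁻¹) * e2norm (r k) := by ring
  -- residual after the AA step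
  have hfinal : f - A.mulVec xk1
      = M.mulVec (r k + ∑ i : Fin m, γ i • (r k - r (k - (i.1+1)))) := by
    have h5 : xk1 = M.mulVec (x k + ∑ i : Fin m, γ i • (x k - x (k - (i.1+1)))) + f := by
      rw [hstep, Matrix.mulVec_add, mulVec_sumFin]
      have : ∀ i : Fin m, γ i • ((M.mulVec (x k) + f) - (M.mulVec (x (k - (i.1+1))) + f))
          = M.mulVec (γ i • (x k - x (k - (i.1+1)))) := by
        intro i
        rw [Matrix.mulVec_smul, Matrix.mulVec_sub]
        congr 1
        abel
      rw [Finset.sum_congr rfl (fun i _ => this i)]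
      abel
    show f - A.mulVec xk1
        = M.mulVec ((f - A.mulVec (x k)) + ∑ i : Fin m, γ i •
            ((f - A.mulVec (x k)) - (f - A.mulVec (x (k - (i.1+1))))))
    rw [h5, hA]
    simp only [Matrix.sub_mulVec, Matrix.one_mulVec, Matrix.mulVec_add, Matrix.mulVec_sub,
      mulVec_sumFin, Matrix.mulVec_smul, smul_sub, smul_add, Finset.sum_sub_distrib]
    abel
  -- assemble
  have hminr : e2norm (r k + ∑ i : Fin m, γ i • (r k - r (k - (i.1+1))))
      ≤ e2norm (r k + ∑ i : Fin m, γ' i • (r k - r (k - (i.1+1)))) := hmin γ'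
  have hMn : (0:ℝ) ≤ opNorm2 M := norm_nonneg _
  show e2norm (f - A.mulVec xk1) ≤ chebC a b m * (opNorm2 W * opNorm2 W⁻¹) * opNorm2 M * e2norm (r k)
  calc e2norm (f - A.mulVec xk1)
      = e2norm (M.mulVec (r k + ∑ i : Fin m, γ i • (r k - r (k - (i.1+1))))) := by rw [hfinal]
    _ ≤ opNorm2 M * e2norm (r k + ∑ i : Fin m, γ i • (r k - r (k - (i.1+1)))) :=
        e2norm_mulVec_le _ _
    _ ≤ opNorm2 M * e2norm (r k + ∑ i : Fin m, γ' i • (r k - r (k - (i.1+1)))) :=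
        mul_le_mul_of_nonneg_left hminr hMn
    _ ≤ opNorm2 M * (chebC a b m * (opNorm2 W * opNorm2 W⁻¹) * e2norm (r k)) :=
        mul_le_mul_of_nonneg_left chain hMn
    _ = chebC a b m * (opNorm2 W * opNorm2 W⁻¹) * opNorm2 M * e2norm (r k) := by ring
end

section
/- Let M = W Λ W^{-1} be diagonalizable with eigenvalues in [a,b], 0,1 ∉ [a,b], and A = I - M. Suppose an 'alternating' scheme produces x_{jp} from x_{(j-1)p} by t fixed-point steps followed by s Anderson steps (p = t+s, m ≤ t), where each Anderson step does not increase the residual by more than a factor \|M\| and the first Anderson step after the fixed-point steps satisfies the one-step gain bound. Then \|r_{jp}\| ≤ (C(a,b,m) κ₂(W))^j \|M\|^{jp} \|r_0\|. -/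

lemma pow_step_aux {n : ℕ} (M : Matrix (Fin n) (Fin n) ℝ) (r : ℕ → Fin n → ℝ)
    (hstep : ∀ k, e2norm (r (k + 1)) ≤ opNorm2 M * e2norm (r k)) :
    ∀ k q, e2norm (r (k + q)) ≤ opNorm2 M ^ q * e2norm (r k) := by
  intro k q
  induction q with
  | zero => simp
  | succ q ih =>
    have hMnn : (0:ℝ) ≤ opNorm2 M := norm_nonneg _
    calc e2norm (r (k + (q+1))) ≤ opNorm2 M * e2norm (r (k+q)) := hstep _
    _ ≤ opNorm2 M * (opNorm2 M ^ q * e2norm (r k)) :=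
        mul_le_mul_of_nonneg_left ih hMnn
    _ = opNorm2 M ^ (q+1) * e2norm (r k) := by ring

/-- Residual bound for the alternating scheme aAA(m)[s]--FP[t] (`p = s + t`, `m ≤ t`):
if every step increases the residual norm by at most a factor `‖M‖`, and the Anderson
step following the `t` fixed-point steps of each period satisfies the one-step gain bound,
then `‖r_{jp}‖ ≤ (C(a,b,m) κ₂(W))^j ‖M‖^{jp} ‖r_0‖`. -/
theorem stmt_10 (n : ℕ) (a b : ℝ) (hab : a < b)
    (h0 : (0 : ℝ) ∉ Set.Icc a b) (h1 : (1 : ℝ) ∉ Set.Icc a b)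
    (W M : Matrix (Fin n) (Fin n) ℝ) (hW : IsUnit W.det)
    (d : Fin n → ℝ) (hd : ∀ i, d i ∈ Set.Icc a b)
    (hM : M = W * Matrix.diagonal d * W⁻¹)
    (A : Matrix (Fin n) (Fin n) ℝ) (hA : A = 1 - M)
    (f : Fin n → ℝ) (x : ℕ → Fin n → ℝ)
    (r : ℕ → Fin n → ℝ) (hr : ∀ k, r k = f - A.mulVec (x k))
    (m s t p : ℕ) (hmt : m ≤ t) (hs : 1 ≤ s) (hp : p = s + t)
    (hstep : ∀ k, e2norm (r (k + 1)) ≤ opNorm2 M * e2norm (r k))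
    (hAA : ∀ j : ℕ, 1 ≤ j →
      e2norm (r (j * p - s + 1)) ≤
        chebC a b m * (opNorm2 W * opNorm2 W⁻¹) * opNorm2 M ^ (t + 1) *
          e2norm (r ((j - 1) * p))) :
    ∀ j : ℕ, e2norm (r (j * p)) ≤
      (chebC a b m * (opNorm2 W * opNorm2 W⁻¹)) ^ j * opNorm2 M ^ (j * p) *
        e2norm (r 0) := by

  intro j
  induction j with
  | zero => simp
  | succ j ih =>
    have hMnn : (0:ℝ) ≤ opNorm2 M := norm_nonneg _
    have hCnn : (0:ℝ) ≤ chebC a b m := inv_nonneg.mpr (abs_nonneg _)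
    have hKnn : (0:ℝ) ≤ chebC a b m * (opNorm2 W * opNorm2 W⁻¹) :=
      mul_nonneg hCnn (mul_nonneg (norm_nonneg _) (norm_nonneg _))
    have hexp : (j+1)*p = j*p + s + t := by rw [hp]; ring
    have hidx1 : (j+1) * p - s + 1 = j * p + t + 1 := by omega
    have hidx2 : (j+1) * p = (j * p + t + 1) + (s - 1) := by omega
    have h1 := hAA (j+1) (by omega)
    rw [hidx1, Nat.add_sub_cancel] at h1
    have h2 := pow_step_aux M r hstep (j*p + t + 1) (s-1)
    rw [← hidx2] at h2
    calc e2norm (r ((j+1)*p)) ≤ opNorm2 M ^ (s-1) * e2norm (r (j*p+t+1)) := h2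
    _ ≤ opNorm2 M ^ (s-1) * (chebC a b m * (opNorm2 W * opNorm2 W⁻¹) * opNorm2 M ^ (t+1) *
          e2norm (r (j*p))) := mul_le_mul_of_nonneg_left h1 (pow_nonneg hMnn _)
    _ ≤ opNorm2 M ^ (s-1) * (chebC a b m * (opNorm2 W * opNorm2 W⁻¹) * opNorm2 M ^ (t+1) *
          ((chebC a b m * (opNorm2 W * opNorm2 W⁻¹)) ^ j * opNorm2 M ^ (j*p) *
            e2norm (r 0))) := by
        apply mul_le_mul_of_nonneg_left _ (pow_nonneg hMnn _)
        exact mul_le_mul_of_nonneg_left ih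
          (mul_nonneg hKnn (pow_nonneg hMnn _))
    _ = (chebC a b m * (opNorm2 W * opNorm2 W⁻¹)) ^ (j+1) * opNorm2 M ^ ((j+1)*p) *
          e2norm (r 0) := by rw [hidx2]; ring
end

section
/- If GMRES applied to A x = b with initial guess x_0 produces iterate x_{jp-1}^G, and aAA(∞)[1]--FP[t] (full-window alternating Anderson with one AA step every period p = t+1) produces iterate x_{jp}, and the GMRES residual norms are strictly decreasing up to iteration k_0, then x_{jp} = q(x_{jp-1}^G) for all jp < k_0, where q(x) = M x + b, M = I - A. Consequently the aAA residual satisfies r_{jp} = M r_{jp-1}^G. -/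
/-- Uniqueness of the nearest point in a submodule of a real inner product space. -/
private lemma uniq_min {F : Type*} [NormedAddCommGroup F] [InnerProductSpace ℝ F]
    (v a b : F) (V : Submodule ℝ F) (ha : a ∈ V) (hb : b ∈ V)
    (hA : ∀ z ∈ V, ‖v - a‖ ≤ ‖v - z‖) (hB : ∀ z ∈ V, ‖v - b‖ ≤ ‖v - z‖) : a = b := by
  have hm : ((2:ℝ)⁻¹ • (a + b)) ∈ V := V.smul_mem _ (add_mem ha hb)
  have h1 := hA _ hm
  have h2 := hB _ hm
  have hp1 := parallelogram_law_with_norm ℝ (v - a) (v - b)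
  have e1 : (v - a) + (v - b) = (2:ℝ) • (v - (2:ℝ)⁻¹ • (a + b)) := by
    have h4 : (2:ℝ) * (2:ℝ)⁻¹ = 1 := by norm_num
    rw [smul_sub, smul_smul, h4, one_smul, two_smul]; abel
  have e2 : (v - a) - (v - b) = b - a := by abel
  rw [e1, e2, norm_smul] at hp1
  have h5 : ‖(2:ℝ)‖ = 2 := by simp
  rw [h5] at hp1
  have h6 : ‖b - a‖ * ‖b - a‖ ≤ 0 := by
    nlinarith [mul_le_mul h1 h1 (norm_nonneg _) (norm_nonneg _),
               mul_le_mul h2 h2 (norm_nonneg _) (norm_nonneg _)]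
  have h7 : ‖b - a‖ = 0 := le_antisymm (by nlinarith [norm_nonneg (b - a)]) (norm_nonneg _)
  exact (sub_eq_zero.mp (norm_eq_zero.mp h7)).symm

/-- Periodic equivalence of aAA(∞)[1]--FP[t] with GMRES: if the GMRES residual norms are
strictly decreasing up to iteration `k₀`, then for every `j ≥ 1` with `j p < k₀`
(`p = t + 1`), the aAA(∞)[1]--FP[t] iterate satisfies `x_{jp} = q(x_{jp-1}^G)`, and hence
`r_{jp} = M r_{jp-1}^G`. -/
theorem stmt_17 (n : ℕ) (A M : Matrix (Fin n) (Fin n) ℝ) (hM : M = 1 - A)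
    (f : Fin n → ℝ) (t p k₀ : ℕ) (ht : 1 ≤ t) (hp : p = t + 1)
    (x xG : ℕ → Fin n → ℝ) (hG0 : xG 0 = x 0)
    -- GMRES: the k-th iterate minimizes the residual over the affine Krylov space
    (hG : ∀ k : ℕ,
      (∃ c : Fin k → ℝ, xG k =
        x 0 + ∑ i : Fin k, c i • (A ^ (i : ℕ)).mulVec (f - A.mulVec (x 0))) ∧
      ∀ y : Fin n → ℝ,
        (∃ c : Fin k → ℝ, y =
          x 0 + ∑ i : Fin k, c i • (A ^ (i : ℕ)).mulVec (f - A.mulVec (x 0))) →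
        e2norm (f - A.mulVec (xG k)) ≤ e2norm (f - A.mulVec y))
    -- GMRES residual norms strictly decreasing up to iteration k₀
    (hdec : ∀ j : ℕ, j + 1 ≤ k₀ →
      e2norm (f - A.mulVec (xG (j + 1))) < e2norm (f - A.mulVec (xG j)))
    -- the aAA(∞)[1]--FP[t] scheme
    (hx1 : x 1 = M.mulVec (x 0) + f)
    (hFP : ∀ k : ℕ, 2 ≤ k → (k - 1) % p < t → x k = M.mulVec (x (k - 1)) + f)
    (hAA : ∀ k : ℕ, 2 ≤ k → t ≤ (k - 1) % p → ∃ γ : Fin (k - 1) → ℝ,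
      (∀ γ' : Fin (k - 1) → ℝ,
        e2norm ((f - A.mulVec (x (k - 1))) + ∑ i : Fin (k - 1), γ i •
            ((f - A.mulVec (x (k - 1))) - (f - A.mulVec (x (k - 1 - (i.1 + 1)))))) ≤
        e2norm ((f - A.mulVec (x (k - 1))) + ∑ i : Fin (k - 1), γ' i •
            ((f - A.mulVec (x (k - 1))) - (f - A.mulVec (x (k - 1 - (i.1 + 1))))))) ∧
      x k = (M.mulVec (x (k - 1)) + f) + ∑ i : Fin (k - 1), γ i •
          ((M.mulVec (x (k - 1)) + f) - (M.mulVec (x (k - 1 - (i.1 + 1))) + f))) :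
    ∀ j : ℕ, 1 ≤ j → j * p < k₀ →
      x (j * p) = M.mulVec (xG (j * p - 1)) + f ∧
      f - A.mulVec (x (j * p)) = M.mulVec (f - A.mulVec (xG (j * p - 1))) := by
  set r0 : Fin n → ℝ := f - A.mulVec (x 0) with hr0
  let Kf : ℕ → Submodule ℝ (Fin n → ℝ) :=
    fun k => Submodule.span ℝ (Set.range fun i : Fin k => (A ^ (i : ℕ)).mulVec r0)
  have hKdef : ∀ k, Kf k =
      Submodule.span ℝ (Set.range fun i : Fin k => (A ^ (i : ℕ)).mulVec r0) := fun _ => rfl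
  -- generators
  have genK : ∀ (k i : ℕ), i < k → (A ^ i).mulVec r0 ∈ Kf k := by
    intro k i h
    rw [hKdef k]
    exact Submodule.subset_span ⟨⟨i, h⟩, rfl⟩
  have Kmono : ∀ {a b : ℕ}, a ≤ b → Kf a ≤ Kf b := by
    intro a b hab
    rw [hKdef a]
    apply Submodule.span_le.mpr
    rintro _ ⟨i, rfl⟩
    have hi := i.2
    exact genK b i (by omega)
  have hr0K : ∀ m : ℕ, 1 ≤ m → r0 ∈ Kf m := by
    intro m hm
    have h := genK m 0 (by omega)
    rwa [pow_zero, Matrix.one_mulVec] at h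
  have K0 : ∀ u : Fin n → ℝ, u ∈ Kf 0 → u = 0 := by
    intro u hu
    rw [hKdef 0] at hu
    have he : (Set.range fun i : Fin 0 => (A ^ (i : ℕ)).mulVec r0) = ∅ := Set.range_eq_empty _
    rw [he, Submodule.span_empty, Submodule.mem_bot] at hu
    exact hu
  have memK : ∀ (k : ℕ) (y : Fin n → ℝ),
      (∃ c : Fin k → ℝ, y = x 0 + ∑ i : Fin k, c i • (A ^ (i : ℕ)).mulVec r0) ↔
        y - x 0 ∈ Kf k := by
    intro k y
    rw [hKdef k, Submodule.mem_span_range_iff_exists_fun ℝ]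
    constructor
    · rintro ⟨c, rfl⟩
      exact ⟨c, by abel⟩
    · rintro ⟨c, hc⟩
      exact ⟨c, by rw [hc]; abel⟩
  have Ksup : ∀ m : ℕ, Kf (m + 1) ≤ Kf m ⊔ Submodule.span ℝ {(A ^ m).mulVec r0} := by
    intro m
    rw [hKdef (m + 1)]
    apply Submodule.span_le.mpr
    rintro _ ⟨i, rfl⟩
    dsimp only
    have hi := i.2
    rcases Nat.lt_or_ge (i : ℕ) m with h | h
    · exact Submodule.mem_sup_left (genK m i h)
    · have hieq : (i : ℕ) = m := by omega
      rw [hieq]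
      exact Submodule.mem_sup_right (Submodule.subset_span rfl)
  have Kdecomp : ∀ (m : ℕ) (u : Fin n → ℝ), u ∈ Kf (m + 1) →
      ∃ (v : Fin n → ℝ) (c : ℝ), v ∈ Kf m ∧ u = v + c • (A ^ m).mulVec r0 := by
    intro m u hu
    rcases Submodule.mem_sup.mp (Ksup m hu) with ⟨v, hv, w, hw, hvwu⟩
    rcases Submodule.mem_span_singleton.mp hw with ⟨c, hc⟩
    exact ⟨v, c, hv, by rw [← hvwu, ← hc]⟩
  have shiftIn : ∀ (m : ℕ) (u : Fin n → ℝ), u ∈ Kf m → A.mulVec u ∈ Kf (m + 1) := by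
    intro m u hu
    have h1 : A.mulVec u = Matrix.mulVecLin A u := (Matrix.mulVecLin_apply A u).symm
    rw [h1]
    have h2 : Submodule.map (Matrix.mulVecLin A) (Kf m) ≤ Kf (m + 1) := by
      rw [hKdef m, Submodule.map_span, Submodule.span_le]
      rintro _ ⟨_, ⟨i, rfl⟩, rfl⟩
      have hi := i.2
      rw [Matrix.mulVecLin_apply, Matrix.mulVec_mulVec, ← pow_succ']
      exact genK (m + 1) ((i : ℕ) + 1) (by omega)
    exact h2 (Submodule.mem_map_of_mem hu)
  -- GMRES basic facts
  have xGmem : ∀ k : ℕ, xG k - x 0 ∈ Kf k := fun k => (memK k _).mp (hG k).1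
  have xGmin : ∀ (k : ℕ) (y : Fin n → ℝ), y - x 0 ∈ Kf k →
      e2norm (f - A.mulVec (xG k)) ≤ e2norm (f - A.mulVec y) :=
    fun k y h => (hG k).2 y ((memK k y).mpr h)
  have notK : ∀ m : ℕ, m + 1 ≤ k₀ → (A ^ m).mulVec r0 ∉ Kf m := by
    intro m hm hmem
    have hle : Kf (m + 1) ≤ Kf m :=
      le_trans (Ksup m) (sup_le le_rfl
        (Submodule.span_le.mpr (Set.singleton_subset_iff.mpr hmem)))
    have h2 := xGmin m (xG (m + 1)) (hle (xGmem (m + 1)))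
    exact absurd (hdec m hm) (not_lt.mpr h2)
  have xGnot : ∀ m : ℕ, m + 1 ≤ k₀ → xG (m + 1) - x 0 ∉ Kf m := by
    intro m hm hmem
    exact absurd (hdec m hm) (not_lt.mpr (xGmin m (xG (m + 1)) hmem))
  have shiftDown : ∀ s : ℕ, s + 2 ≤ k₀ → ∀ u : Fin n → ℝ,
      u ∈ Kf (s + 1) → A.mulVec u ∈ Kf (s + 1) → u ∈ Kf s := by
    intro s hs u hu hAu
    rcases Kdecomp s u hu with ⟨v, c, hv, rfl⟩
    by_cases hc : c = 0
    · simpa [hc] using hv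
    · exfalso
      have hAv : A.mulVec v ∈ Kf (s + 1) := shiftIn s v hv
      have h1 : A.mulVec (v + c • (A ^ s).mulVec r0)
          = A.mulVec v + c • (A ^ (s + 1)).mulVec r0 := by
        rw [Matrix.mulVec_add, Matrix.mulVec_smul, Matrix.mulVec_mulVec, ← pow_succ']
      rw [h1] at hAu
      have h2 : c • (A ^ (s + 1)).mulVec r0 ∈ Kf (s + 1) := by
        have h3 := sub_mem hAu hAv
        rwa [add_sub_cancel_left] at h3
      have h3 : (A ^ (s + 1)).mulVec r0 ∈ Kf (s + 1) := by
        have h4 := Submodule.smul_mem _ c⁻¹ h2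
        rwa [smul_smul, inv_mul_cancel₀ hc, one_smul] at h4
      exact notK (s + 1) (by omega) h3
  have injK : ∀ m : ℕ, m + 1 ≤ k₀ → ∀ u : Fin n → ℝ,
      u ∈ Kf m → A.mulVec u = 0 → u = 0 := by
    intro m
    induction m with
    | zero => intro _ u hu _; exact K0 u hu
    | succ s ih =>
      intro hm u hu hAu
      have h1 : u ∈ Kf s := shiftDown s hm u hu (by rw [hAu]; exact zero_mem _)
      exact ih (by omega) u h1 hAu
  have resid : ∀ y : Fin n → ℝ, r0 - A.mulVec (y - x 0) = f - A.mulVec y := by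
    intro y
    rw [hr0, Matrix.mulVec_sub]
    abel
  have stepdeg : ∀ s : ℕ, s + 2 ≤ k₀ → ∀ y : Fin n → ℝ,
      y - x 0 ∈ Kf (s + 1) → y - x 0 ∉ Kf s →
      ((M.mulVec y + f) - x 0 ∈ Kf (s + 2) ∧ (M.mulVec y + f) - x 0 ∉ Kf (s + 1)) := by
    intro s hs y hy hy'
    have key : (M.mulVec y + f) - x 0 = (y - x 0) + (r0 - A.mulVec (y - x 0)) := by
      rw [hM, Matrix.sub_mulVec, Matrix.one_mulVec, Matrix.mulVec_sub, hr0]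
      abel
    constructor
    · rw [key]
      exact add_mem (Kmono (by omega) hy)
        (sub_mem (hr0K (s + 2) (by omega)) (shiftIn (s + 1) _ hy))
    · intro hmem
      have hAu : A.mulVec (y - x 0) ∈ Kf (s + 1) := by
        have h1 : (y - x 0) + r0 - ((M.mulVec y + f) - x 0) = A.mulVec (y - x 0) := by
          rw [key]; abel
        rw [← h1]
        exact sub_mem (add_mem hy (hr0K (s + 1) (by omega))) hmem
      exact hy' (shiftDown s hs _ hy hAu)
  -- main induction
  have main : ∀ k : ℕ, 1 ≤ k → k < k₀ →
      (x k - x 0 ∈ Kf k ∧ x k - x 0 ∉ Kf (k - 1)) ∧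
      (p ∣ k → x k = M.mulVec (xG (k - 1)) + f) := by
    intro k
    induction k using Nat.strong_induction_on with
    | _ k IH =>
    intro hk1 hkk
    by_cases hk : k = 1
    · subst hk
      have hx1' : x 1 - x 0 = r0 := by
        rw [hx1, hM, Matrix.sub_mulVec, Matrix.one_mulVec, hr0]
        abel
      refine ⟨⟨?_, ?_⟩, ?_⟩
      · rw [hx1']; exact hr0K 1 le_rfl
      · rw [hx1']
        intro h
        have h2 := notK 0 (by omega)
        rw [pow_zero, Matrix.one_mulVec] at h2
        exact h2 h
      · intro hdvd
        exact absurd (Nat.le_of_dvd one_pos hdvd) (by omega)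
    · obtain ⟨s, rfl⟩ : ∃ s, k = s + 2 := ⟨k - 2, by omega⟩
      by_cases hd : p ∣ (s + 2)
      · -- Anderson acceleration step
        have hmod : (s + 1) % p = t := by
          rcases hd with ⟨j2, hj2⟩
          rcases j2 with _ | j3
          · rw [Nat.mul_zero] at hj2; omega
          · rw [Nat.mul_succ] at hj2
            obtain ⟨w, hw⟩ : ∃ w, p * j3 = w := ⟨_, rfl⟩
            rw [hw] at hj2
            have hs1 : s + 1 = w + t := by omega
            rw [hs1, ← hw, Nat.mul_add_mod]
            exact Nat.mod_eq_of_lt (by omega)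
        have hAA2 : ∃ γ : Fin (s + 1) → ℝ,
            (∀ γ' : Fin (s + 1) → ℝ,
              e2norm ((f - A.mulVec (x (s + 1))) + ∑ i : Fin (s + 1), γ i •
                  ((f - A.mulVec (x (s + 1))) - (f - A.mulVec (x (s + 1 - (i.1 + 1)))))) ≤
              e2norm ((f - A.mulVec (x (s + 1))) + ∑ i : Fin (s + 1), γ' i •
                  ((f - A.mulVec (x (s + 1))) - (f - A.mulVec (x (s + 1 - (i.1 + 1))))))) ∧
            x (s + 2) = (M.mulVec (x (s + 1)) + f) + ∑ i : Fin (s + 1), γ i •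
                ((M.mulVec (x (s + 1)) + f) - (M.mulVec (x (s + 1 - (i.1 + 1))) + f)) :=
          hAA (s + 2) (by omega) (by rw [show s + 2 - 1 = s + 1 from rfl, hmod])
        obtain ⟨γ, hmin, hxk⟩ := hAA2
        have hGood : ∀ i : ℕ, 1 ≤ i → i ≤ s + 1 →
            x i - x 0 ∈ Kf i ∧ x i - x 0 ∉ Kf (i - 1) :=
          fun i h1 h2 => (IH i (by omega) h1 (by omega)).1
        have hall : ∀ i : ℕ, i ≤ s + 1 → x i - x 0 ∈ Kf i := by
          intro i hi
          rcases Nat.eq_zero_or_pos i with rfl | h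
          · simpa using zero_mem (Kf 0)
          · exact (hGood i h hi).1
        -- triangular spanning of the Krylov space by the iterate differences
        have spanD : ∀ m : ℕ, m ≤ s + 1 →
            Submodule.span ℝ (Set.range fun i : Fin m => x (i.1 + 1) - x 0) = Kf m := by
          intro m
          induction m with
          | zero =>
            intro _
            have h1 : (Set.range fun i : Fin 0 => x (i.1 + 1) - x 0) = ∅ := Set.range_eq_empty _
            have h2 : (Set.range fun i : Fin 0 => (A ^ (i : ℕ)).mulVec r0) = ∅ :=
              Set.range_eq_empty _
            rw [hKdef 0, h1, h2]
          | succ m ihm =>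
            intro hm
            have ihm' := ihm (by omega)
            have hmono : Submodule.span ℝ (Set.range fun i : Fin m => x (i.1 + 1) - x 0) ≤
                Submodule.span ℝ (Set.range fun i : Fin (m + 1) => x (i.1 + 1) - x 0) := by
              apply Submodule.span_mono
              rintro _ ⟨i, rfl⟩
              have hi := i.2
              exact ⟨⟨i.1, by omega⟩, rfl⟩
            apply le_antisymm
            · apply Submodule.span_le.mpr
              rintro _ ⟨i, rfl⟩
              have hi := i.2
              exact Kmono (show i.1 + 1 ≤ m + 1 by omega) (hall (i.1 + 1) (by omega))
            · have hx1m := hGood (m + 1) (by omega) (by omega)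
              obtain ⟨v, c, hv, hvc⟩ := Kdecomp m _ hx1m.1
              have hc : c ≠ 0 := by
                rintro rfl
                rw [zero_smul, add_zero] at hvc
                exact hx1m.2 (by rw [hvc]; exact hv)
              have hvS : v ∈ Submodule.span ℝ
                  (Set.range fun i : Fin (m + 1) => x (i.1 + 1) - x 0) :=
                hmono (ihm' ▸ hv)
              have hxS : x (m + 1) - x 0 ∈ Submodule.span ℝ
                  (Set.range fun i : Fin (m + 1) => x (i.1 + 1) - x 0) :=
                Submodule.subset_span ⟨⟨m, by omega⟩, rfl⟩
              have hgen : (A ^ m).mulVec r0 ∈ Submodule.span ℝ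
                  (Set.range fun i : Fin (m + 1) => x (i.1 + 1) - x 0) := by
                have h5 : (A ^ m).mulVec r0 = c⁻¹ • ((x (m + 1) - x 0) - v) := by
                  rw [hvc, add_sub_cancel_left, smul_smul, inv_mul_cancel₀ hc, one_smul]
                rw [h5]
                exact Submodule.smul_mem _ _ (sub_mem hxS hvS)
              refine le_trans (Ksup m) (sup_le ?_ ?_)
              · rw [← ihm']; exact hmono
              · exact Submodule.span_le.mpr (Set.singleton_subset_iff.mpr hgen)
        have spanE : Submodule.span ℝ
            (Set.range fun i : Fin (s + 1) => x (s + 1) - x (s + 1 - (i.1 + 1))) = Kf (s + 1) := by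
          apply le_antisymm
          · apply Submodule.span_le.mpr
            rintro _ ⟨i, rfl⟩
            dsimp only
            have hi := i.2
            have h1 : x (s + 1) - x (s + 1 - (i.1 + 1)) =
                (x (s + 1) - x 0) - (x (s + 1 - (i.1 + 1)) - x 0) := by abel
            rw [h1]
            exact sub_mem (hall (s + 1) le_rfl)
              (Kmono (show s + 1 - (i.1 + 1) ≤ s + 1 by omega) (hall _ (by omega)))
          · rw [← spanD (s + 1) le_rfl]
            apply Submodule.span_le.mpr
            rintro _ ⟨i, rfl⟩
            dsimp only
            have hi := i.2
            have hlast : x (s + 1) - x 0 ∈ Submodule.span ℝ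
                (Set.range fun i : Fin (s + 1) => x (s + 1) - x (s + 1 - (i.1 + 1))) :=
              Submodule.subset_span ⟨⟨s, by omega⟩, by
                show x (s + 1) - x (s + 1 - (s + 1)) = x (s + 1) - x 0
                rw [Nat.sub_self]⟩
            rcases Nat.lt_or_ge i.1 s with his | his
            · have hj : s - i.1 - 1 < s + 1 := by omega
              have hE : x (s + 1) - x (i.1 + 1) ∈ Submodule.span ℝ
                  (Set.range fun i : Fin (s + 1) => x (s + 1) - x (s + 1 - (i.1 + 1))) :=
                Submodule.subset_span ⟨⟨s - i.1 - 1, hj⟩, by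
                  show x (s + 1) - x (s + 1 - (s - i.1 - 1 + 1)) = x (s + 1) - x (i.1 + 1)
                  have he : s + 1 - (s - i.1 - 1 + 1) = i.1 + 1 := by omega
                  rw [he]⟩
              have h2 : x (i.1 + 1) - x 0 =
                  (x (s + 1) - x 0) - (x (s + 1) - x (i.1 + 1)) := by abel
              rw [h2]
              exact sub_mem hlast hE
            · have hieq : i.1 = s := by omega
              rw [hieq]
              exact hlast
        -- residual form of the Anderson objective
        have hXres : ∀ γ' : Fin (s + 1) → ℝ,
            (f - A.mulVec (x (s + 1))) + ∑ i : Fin (s + 1), γ' i •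
                ((f - A.mulVec (x (s + 1))) - (f - A.mulVec (x (s + 1 - (i.1 + 1)))))
            = f - A.mulVec (x (s + 1) + ∑ i : Fin (s + 1), γ' i •
                (x (s + 1) - x (s + 1 - (i.1 + 1)))) := by
          intro γ'
          have hsum : A.mulVec (∑ i : Fin (s + 1), γ' i • (x (s + 1) - x (s + 1 - (i.1 + 1))))
              = ∑ i : Fin (s + 1), γ' i • A.mulVec (x (s + 1) - x (s + 1 - (i.1 + 1))) := by
            simp only [← Matrix.mulVecLin_apply, map_sum, map_smul]
          have hterm : ∀ i : Fin (s + 1),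
              γ' i • ((f - A.mulVec (x (s + 1))) - (f - A.mulVec (x (s + 1 - (i.1 + 1)))))
              = -(γ' i • A.mulVec (x (s + 1) - x (s + 1 - (i.1 + 1)))) := by
            intro i
            rw [Matrix.mulVec_sub, ← smul_neg]
            congr 1
            abel
          rw [Matrix.mulVec_add, hsum, Finset.sum_congr rfl (fun i _ => hterm i),
            Finset.sum_neg_distrib]
          abel
        have hXmem : ∀ γ' : Fin (s + 1) → ℝ,
            (x (s + 1) + ∑ i : Fin (s + 1), γ' i • (x (s + 1) - x (s + 1 - (i.1 + 1)))) - x 0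
              ∈ Kf (s + 1) := by
          intro γ'
          have h1 : (x (s + 1) + ∑ i : Fin (s + 1), γ' i •
              (x (s + 1) - x (s + 1 - (i.1 + 1)))) - x 0
              = (x (s + 1) - x 0) + ∑ i : Fin (s + 1), γ' i •
                (x (s + 1) - x (s + 1 - (i.1 + 1))) := by abel
          rw [h1]
          refine add_mem (hall (s + 1) le_rfl)
            (Submodule.sum_mem _ fun i _ => Submodule.smul_mem _ _ ?_)
          exact spanE ▸ Submodule.subset_span ⟨i, rfl⟩
        have hXsurj : ∀ w ∈ Kf (s + 1), ∃ γ' : Fin (s + 1) → ℝ,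
            (x (s + 1) + ∑ i : Fin (s + 1), γ' i • (x (s + 1) - x (s + 1 - (i.1 + 1)))) - x 0
              = w := by
          intro w hw
          have h1 : w - (x (s + 1) - x 0) ∈ Submodule.span ℝ
              (Set.range fun i : Fin (s + 1) => x (s + 1) - x (s + 1 - (i.1 + 1))) := by
            rw [spanE]
            exact sub_mem hw (hall (s + 1) le_rfl)
          obtain ⟨γ', hγ'⟩ := (Submodule.mem_span_range_iff_exists_fun ℝ).mp h1
          refine ⟨γ', ?_⟩
          rw [show (x (s + 1) + ∑ i : Fin (s + 1), γ' i •
              (x (s + 1) - x (s + 1 - (i.1 + 1)))) - x 0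
              = (∑ i : Fin (s + 1), γ' i • (x (s + 1) - x (s + 1 - (i.1 + 1))))
                + (x (s + 1) - x 0) from by abel, hγ']
          abel
        -- the Anderson combination minimizes the residual over the Krylov space
        have hu2min : ∀ w ∈ Kf (s + 1),
            e2norm (r0 - A.mulVec ((x (s + 1) + ∑ i : Fin (s + 1), γ i •
              (x (s + 1) - x (s + 1 - (i.1 + 1)))) - x 0)) ≤ e2norm (r0 - A.mulVec w) := by
          intro w hw
          obtain ⟨γ', hγ'⟩ := hXsurj w hw
          have h1 := hmin γ'
          rw [hXres γ, hXres γ'] at h1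
          rw [resid, ← hγ', resid]
          exact h1
        have hu1min : ∀ w ∈ Kf (s + 1),
            e2norm (r0 - A.mulVec (xG (s + 1) - x 0)) ≤ e2norm (r0 - A.mulVec w) := by
          intro w hw
          rw [resid]
          have h2 : r0 - A.mulVec w = f - A.mulVec (x 0 + w) := by
            rw [hr0, Matrix.mulVec_add]; abel
          rw [h2]
          exact xGmin (s + 1) (x 0 + w) (by rw [add_sub_cancel_left]; exact hw)
        -- uniqueness of the least-squares residual: the two iterates coincide
        have hkey : A.mulVec (xG (s + 1) - x 0) =
            A.mulVec ((x (s + 1) + ∑ i : Fin (s + 1), γ i •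
              (x (s + 1) - x (s + 1 - (i.1 + 1)))) - x 0) := by
          set T : (Fin n → ℝ) ≃ₗ[ℝ] WithLp 2 (Fin n → ℝ) :=
            (WithLp.linearEquiv 2 ℝ (Fin n → ℝ)).symm with hTd
          have hT : ∀ v : Fin n → ℝ, e2norm v = ‖T v‖ := fun _ => rfl
          apply T.injective
          apply uniq_min (T r0) _ _
            (Submodule.map (T : (Fin n → ℝ) →ₗ[ℝ] WithLp 2 (Fin n → ℝ))
              (Submodule.map (Matrix.mulVecLin A) (Kf (s + 1))))
          · exact Submodule.mem_map_of_mem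
              (Submodule.mem_map.mpr ⟨_, xGmem (s + 1), Matrix.mulVecLin_apply A _⟩)
          · exact Submodule.mem_map_of_mem
              (Submodule.mem_map.mpr ⟨_, hXmem γ, Matrix.mulVecLin_apply A _⟩)
          · intro z hz
            obtain ⟨y2, hy2, rfl⟩ := Submodule.mem_map.mp hz
            obtain ⟨w, hw, rfl⟩ := Submodule.mem_map.mp hy2
            simp only [LinearEquiv.coe_coe, Matrix.mulVecLin_apply, ← map_sub]
            rw [← hT, ← hT]
            exact hu1min w hw
          · intro z hz
            obtain ⟨y2, hy2, rfl⟩ := Submodule.mem_map.mp hz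
            obtain ⟨w, hw, rfl⟩ := Submodule.mem_map.mp hy2
            simp only [LinearEquiv.coe_coe, Matrix.mulVecLin_apply, ← map_sub]
            rw [← hT, ← hT]
            exact hu2min w hw
        have hdiff : A.mulVec ((xG (s + 1) - x 0) -
            ((x (s + 1) + ∑ i : Fin (s + 1), γ i •
              (x (s + 1) - x (s + 1 - (i.1 + 1)))) - x 0)) = 0 := by
          rw [Matrix.mulVec_sub, hkey, sub_self]
        have hz0 : (xG (s + 1) - x 0) -
            ((x (s + 1) + ∑ i : Fin (s + 1), γ i •
              (x (s + 1) - x (s + 1 - (i.1 + 1)))) - x 0) = 0 :=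
          injK (s + 1) (by omega) _ (sub_mem (xGmem (s + 1)) (hXmem γ)) hdiff
        have hxGeq : x (s + 1) + ∑ i : Fin (s + 1), γ i •
            (x (s + 1) - x (s + 1 - (i.1 + 1))) = xG (s + 1) := by
          have h9 := sub_eq_zero.mp hz0
          exact (sub_left_inj.mp h9).symm
        -- x (s+2) = q(x̄) for the Anderson combination x̄
        have hterm2 : ∀ i : Fin (s + 1),
            γ i • ((M.mulVec (x (s + 1)) + f) - (M.mulVec (x (s + 1 - (i.1 + 1))) + f))
            = γ i • M.mulVec (x (s + 1) - x (s + 1 - (i.1 + 1))) := by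
          intro i
          rw [Matrix.mulVec_sub]
          congr 1
          abel
        have hMsum : M.mulVec (∑ i : Fin (s + 1), γ i • (x (s + 1) - x (s + 1 - (i.1 + 1))))
            = ∑ i : Fin (s + 1), γ i • M.mulVec (x (s + 1) - x (s + 1 - (i.1 + 1))) := by
          simp only [← Matrix.mulVecLin_apply, map_sum, map_smul]
        have hxk2 : x (s + 2) = M.mulVec (x (s + 1) + ∑ i : Fin (s + 1), γ i •
            (x (s + 1) - x (s + 1 - (i.1 + 1)))) + f := by
          rw [hxk, Finset.sum_congr rfl (fun i _ => hterm2 i), Matrix.mulVec_add, hMsum]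
          abel
        have hres1 : x (s + 2) = M.mulVec (xG (s + 1)) + f := by
          rw [hxk2, hxGeq]
        have hnot : xG (s + 1) - x 0 ∉ Kf s := xGnot s (by omega)
        have hstep := stepdeg s (by omega) (xG (s + 1)) (xGmem (s + 1)) hnot
        refine ⟨⟨?_, ?_⟩, fun _ => hres1⟩
        · rw [hres1]; exact hstep.1
        · intro h
          exact hstep.2 (by rw [← hres1]; exact h)
      · -- fixed-point (Richardson) step
        have hcond : (s + 1) % p < t := by
          by_contra hcon
          have hlt : (s + 1) % p < p := Nat.mod_lt _ (by omega)
          have heq : (s + 1) % p = t := by omega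
          apply hd
          have e := Nat.div_add_mod (s + 1) p
          refine ⟨(s + 1) / p + 1, ?_⟩
          rw [Nat.mul_add, Nat.mul_one]
          obtain ⟨w, hw⟩ : ∃ w, p * ((s + 1) / p) = w := ⟨_, rfl⟩
          rw [hw] at e ⊢
          omega
        have hstep' : x (s + 2) = M.mulVec (x (s + 1)) + f := hFP (s + 2) (by omega) hcond
        have hG1 := (IH (s + 1) (by omega) (by omega) (by omega)).1
        have hstep := stepdeg s (by omega) (x (s + 1)) hG1.1 hG1.2
        refine ⟨⟨?_, ?_⟩, fun hdvd => absurd hdvd hd⟩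
        · rw [hstep']; exact hstep.1
        · intro h
          exact hstep.2 (by rw [← hstep']; exact h)
  -- conclude
  intro j hj hjp
  have hp1 : 1 ≤ j * p := by
    have h1 := Nat.mul_le_mul hj (show 1 ≤ p by omega)
    simpa using h1
  have h1 := (main (j * p) hp1 hjp).2 (dvd_mul_left p j)
  refine ⟨h1, ?_⟩
  rw [h1, hM]
  simp only [Matrix.sub_mulVec, Matrix.one_mulVec, Matrix.mulVec_add, Matrix.mulVec_sub]
  abel
end
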